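/- Let F(t) = t + 1 − e^{−t} for t ≥ 0 and J(w) = ∑_{i=1}^3 F(|w_i|) on ℝ³. Let x, y > 0, z = x + y, and let ν = ℝ·(x, y, z) be the one-dimensional subspace of ℝ³ spanned by (x, y, z). Then ν satisfies NSP at sparsity k = 1 for J: for every w ∈ ν with w ≠ 0 and every index set T ⊆ {1,2,3} with |T| ≤ 1, J(w_T) < J(w_{T^c}). -/

import Mathlib

noncomputable section

/-- The sparseness measure `F(t) = t + 1 − e^{−t}` from Counter-example 1. -/
def F7 (t : ℝ) : ℝ := t + 1 - Real.exp (-t)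

/-- The restricted cost `J(x_T) = ∑ i ∈ T, F |x i|`. -/
def costJT {n : ℕ} (F : ℝ → ℝ) (T : Finset (Fin n)) (x : EuclideanSpace ℝ (Fin n)) : ℝ :=
  ∑ i ∈ T, F |x i|

lemma F7_pos {t : ℝ} (ht : 0 < t) : 0 < F7 t := by
  have := Real.exp_lt_one_iff.mpr (by linarith : -t < 0)
  unfold F7; linarith

lemma F7_mono {a b : ℝ} (hab : a < b) : F7 a < F7 b := by
  have := Real.exp_lt_exp.mpr (by linarith : -b < -a)
  unfold F7; linarith

lemma F7_subadd {a b : ℝ} (ha : 0 < a) (hb : 0 < b) :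
    F7 (a + b) < F7 a + F7 b := by
  have hu := Real.exp_lt_one_iff.mpr (by linarith : -a < 0)
  have hv := Real.exp_lt_one_iff.mpr (by linarith : -b < 0)
  have hup : 0 < Real.exp (-a) := Real.exp_pos _
  have hvp : 0 < Real.exp (-b) := Real.exp_pos _
  have h : Real.exp (-(a + b)) = Real.exp (-a) * Real.exp (-b) := by
    rw [← Real.exp_add]; ring_nf
  unfold F7
  rw [h]
  nlinarith [mul_pos (sub_pos.mpr hu) (sub_pos.mpr hv)]

theorem stmt7 (x y : ℝ) (hx : 0 < x) (hy : 0 < y) :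
    ∀ w : EuclideanSpace ℝ (Fin 3),
      w ∈ Submodule.span ℝ {(WithLp.toLp 2 ![x, y, x + y] : EuclideanSpace ℝ (Fin 3))} → w ≠ 0 →
      ∀ T : Finset (Fin 3), T.card ≤ 1 →
        costJT F7 T w < costJT F7 Tᶜ w := by
  intro w hw hw0 T hT
  rw [Submodule.mem_span_singleton] at hw
  obtain ⟨c, rfl⟩ := hw
  have hc : c ≠ 0 := by
    rintro rfl; exact hw0 (zero_smul _ _)
  have hcp : 0 < |c| := abs_pos.mpr hc
  set a := |c| * x with ha
  set b := |c| * y with hb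
  have hap : 0 < a := mul_pos hcp hx
  have hbp : 0 < b := mul_pos hcp hy
  have h0 : |(c • (WithLp.toLp 2 ![x, y, x + y] : EuclideanSpace ℝ (Fin 3))) 0| = a := by
    show |c * x| = a
    rw [abs_mul, abs_of_pos hx]
  have h1 : |(c • (WithLp.toLp 2 ![x, y, x + y] : EuclideanSpace ℝ (Fin 3))) 1| = b := by
    show |c * y| = b
    rw [abs_mul, abs_of_pos hy]
  have h2 : |(c • (WithLp.toLp 2 ![x, y, x + y] : EuclideanSpace ℝ (Fin 3))) 2| = a + b := by
    show |c * (x + y)| = a + b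
    rw [abs_mul, abs_of_pos (by linarith : (0:ℝ) < x + y)]
    ring
  rcases T.eq_empty_or_nonempty with rfl | ⟨i, hi⟩
  · simp only [costJT, Finset.compl_empty, Fin.sum_univ_three, Finset.sum_empty, h0, h1, h2]
    have := F7_pos hap; have := F7_pos hbp; have := F7_pos (show (0:ℝ) < a + b by linarith)
    linarith
  · have hTeq : T = {i} := by
      apply Finset.eq_singleton_iff_unique_mem.mpr
      exact ⟨hi, fun j hj => Finset.card_le_one.mp hT j hj i hi⟩
    subst hTeq
    fin_cases i
    · show costJT F7 {0} (c • (WithLp.toLp 2 ![x, y, x + y] : EuclideanSpace ℝ (Fin 3))) <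
          costJT F7 ({0} : Finset (Fin 3))ᶜ (c • (WithLp.toLp 2 ![x, y, x + y] : EuclideanSpace ℝ (Fin 3)))
      have hcompl : ({0} : Finset (Fin 3))ᶜ = {1, 2} := by decide
      rw [costJT, costJT, hcompl, Finset.sum_singleton,
        Finset.sum_insert (by decide), Finset.sum_singleton]
      rw [h0, h1, h2]
      have := F7_mono (show a < a + b by linarith)
      have := F7_pos hbp
      linarith
    · show costJT F7 {1} (c • (WithLp.toLp 2 ![x, y, x + y] : EuclideanSpace ℝ (Fin 3))) <
          costJT F7 ({1} : Finset (Fin 3))ᶜ (c • (WithLp.toLp 2 ![x, y, x + y] : EuclideanSpace ℝ (Fin 3)))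
      have hcompl : ({1} : Finset (Fin 3))ᶜ = {0, 2} := by decide
      rw [costJT, costJT, hcompl, Finset.sum_singleton,
        Finset.sum_insert (by decide), Finset.sum_singleton]
      rw [h0, h1, h2]
      have := F7_mono (show b < a + b by linarith)
      have := F7_pos hap
      linarith
    · show costJT F7 {2} (c • (WithLp.toLp 2 ![x, y, x + y] : EuclideanSpace ℝ (Fin 3))) <
          costJT F7 ({2} : Finset (Fin 3))ᶜ (c • (WithLp.toLp 2 ![x, y, x + y] : EuclideanSpace ℝ (Fin 3)))
      have hcompl : ({2} : Finset (Fin 3))ᶜ = {0, 1} := by decide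
      rw [costJT, costJT, hcompl, Finset.sum_singleton,
        Finset.sum_insert (by decide), Finset.sum_singleton]
      rw [h0, h1, h2]
      have := F7_subadd hap hbp
      linarith
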